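/- The function ψ(θ) = π − θ on [0, π] defines a positive semi-definite kernel on the unit sphere S^{p-1} for every p ≥ 1: for any points z_1,…,z_m ∈ S^{p-1} and any c ∈ ℝ^m, Σ_{k,ℓ} c_k c_ℓ ψ(arccos(⟨z_k, z_ℓ⟩)) ≥ 0. -/

import Mathlib

open Real

open MeasureTheory Set

noncomputable section


lemma integral_r_exp : ∫ r in Ioi (0:ℝ), r * exp (-(r^2)/2) = 1 := by
  have hderiv : ∀ x ∈ Ioi (0:ℝ), HasDerivAt (fun r : ℝ => -exp (-(r^2)/2))
      (x * exp (-(x^2)/2)) x := by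
    intro x _
    have h1 : HasDerivAt (fun r : ℝ => -(r^2)/2) (-x) x := by
      simpa [neg_div] using ((hasDerivAt_pow 2 x).div_const 2).fun_neg
    have := (h1.exp).fun_neg
    refine this.congr_deriv ?_
    ring
  have htend : Filter.Tendsto (fun r : ℝ => -exp (-(r^2)/2)) Filter.atTop (nhds 0) := by
    have h1 : Filter.Tendsto (fun r : ℝ => -(r^2)/2) Filter.atTop Filter.atBot := by
      apply Filter.Tendsto.atBot_div_const (by norm_num : (0:ℝ) < 2)
      exact Filter.tendsto_neg_atBot_iff.mpr (Filter.tendsto_pow_atTop two_ne_zero)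
    have := (Real.tendsto_exp_atBot.comp h1).neg
    simpa using this
  have hcont : ContinuousWithinAt (fun r : ℝ => -exp (-(r^2)/2)) (Ici (0:ℝ)) 0 :=
    (Continuous.continuousWithinAt (by continuity))
  have := integral_Ioi_of_hasDerivAt_of_nonneg hcont hderiv
    (fun x hx => mul_nonneg (le_of_lt hx) (exp_pos _).le) htend
  simpa using this

lemma angle_iff (α θ : ℝ) (hα0 : 0 ≤ α) (hαπ : α ≤ π) (hθ1 : -π < θ) (hθ2 : θ < π) :
    (0 < cos θ ∧ 0 < cos (θ - α)) ↔ (α - π/2 < θ ∧ θ < π/2) := by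
  constructor
  · rintro ⟨h1, h2⟩
    have hA : θ < π/2 := by
      by_contra hc
      push_neg at hc
      have : cos θ ≤ 0 := cos_nonpos_of_pi_div_two_le_of_le hc (by linarith [pi_pos])
      linarith
    have hB : -(π/2) < θ := by
      by_contra hc
      push_neg at hc
      have : cos (-θ) ≤ 0 := cos_nonpos_of_pi_div_two_le_of_le (by linarith) (by linarith)
      rw [cos_neg] at this
      linarith
    refine ⟨?_, hA⟩
    by_contra hc
    push_neg at hc
    have : cos (α - θ) ≤ 0 := cos_nonpos_of_pi_div_two_le_of_le (by linarith) (by linarith)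
    rw [← cos_neg, neg_sub] at this
    linarith
  · rintro ⟨h1, h2⟩
    constructor
    · exact cos_pos_of_mem_Ioo ⟨by linarith, h2⟩
    · exact cos_pos_of_mem_Ioo ⟨by linarith, by linarith⟩

lemma wedge_integral (ρ : ℝ) (h1 : -1 ≤ ρ) (h2 : ρ ≤ 1) :
    ∫ v : ℝ × ℝ, (if 0 < v.1 ∧ 0 < ρ * v.1 + √(1 - ρ^2) * v.2 then (1:ℝ) else 0)
        * exp (-(v.1^2 + v.2^2)/2) = π - arccos ρ := by
  set s : ℝ := √(1 - ρ^2) with hs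
  set α : ℝ := arccos ρ with hα
  have hcos : cos α = ρ := Real.cos_arccos h1 h2
  have hsin : sin α = s := Real.sin_arccos ρ
  have hα0 : 0 ≤ α := Real.arccos_nonneg ρ
  have hαπ : α ≤ π := Real.arccos_le_pi ρ
  rw [← integral_comp_polarCoord_symm]
  have htarget : polarCoord.target = Ioi (0:ℝ) ×ˢ Ioo (-π) π := rfl
  rw [htarget]
  have heq : ∀ p ∈ Ioi (0:ℝ) ×ˢ Ioo (-π) π,
      p.1 • ((if 0 < (polarCoord.symm p).1 ∧
            0 < ρ * (polarCoord.symm p).1 + s * (polarCoord.symm p).2 then (1:ℝ) else 0)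
          * exp (-((polarCoord.symm p).1^2 + (polarCoord.symm p).2^2)/2)) =
      (fun r : ℝ => r * exp (-(r^2)/2)) p.1 *
        (fun θ : ℝ => if α - π/2 < θ ∧ θ < π/2 then (1:ℝ) else 0) p.2 := by
    rintro ⟨r, θ⟩ ⟨hr, hθ⟩
    simp only [polarCoord_symm_apply]
    have hr0 : 0 < r := hr
    have hnorm : (r * cos θ)^2 + (r * sin θ)^2 = r^2 := by
      have := sin_sq_add_cos_sq θ
      ring_nf
      nlinarith [this]
    have hiff1 : (0 < r * cos θ) ↔ 0 < cos θ := by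
      constructor
      · intro h; nlinarith
      · intro h; exact mul_pos hr0 h
    have hiff2 : (0 < ρ * (r * cos θ) + s * (r * sin θ)) ↔ 0 < cos (θ - α) := by
      have hrw : ρ * (r * cos θ) + s * (r * sin θ) = r * cos (θ - α) := by
        rw [Real.cos_sub, ← hcos, ← hsin]; ring
      rw [hrw]
      constructor
      · intro h; nlinarith
      · intro h; exact mul_pos hr0 h
    have hmem := hθ
    simp only [mem_Ioo] at hmem
    simp only [hnorm, hiff1, hiff2, angle_iff α θ hα0 hαπ hmem.1 hmem.2, smul_eq_mul]
    ring
  rw [setIntegral_congr_fun (by measurability) heq]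
  rw [Measure.volume_eq_prod,
    setIntegral_prod_mul (μ := volume) (ν := volume) (fun r : ℝ => r * exp (-(r^2)/2))
      (fun θ : ℝ => if α - π/2 < θ ∧ θ < π/2 then (1:ℝ) else 0) (Ioi 0) (Ioo (-π) π)]
  rw [integral_r_exp, one_mul]
  have hsub : Ioo (α - π/2) (π/2) ⊆ Ioo (-π) π := by
    intro x hx
    simp only [mem_Ioo] at hx ⊢
    constructor
    · nlinarith [pi_pos, hx.1]
    · nlinarith [pi_pos, hx.2]
  have : (fun θ : ℝ => if α - π/2 < θ ∧ θ < π/2 then (1:ℝ) else 0)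
      = (Ioo (α - π/2) (π/2)).indicator (fun _ => (1:ℝ)) := by
    funext θ
    simp [Set.indicator_apply, mem_Ioo]
  rw [this, integral_indicator measurableSet_Ioo, Measure.restrict_restrict measurableSet_Ioo,
    setIntegral_const]
  rw [inter_eq_self_of_subset_left hsub, Real.volume_real_Ioo_of_le (by linarith)]
  rw [smul_eq_mul, mul_one]
  ring

def e2 {n : ℕ} (hn : 2 ≤ n) : Fin 2 ≃ {i : Fin n // (i : ℕ) < 2} where
  toFun j := ⟨⟨j.1, lt_of_lt_of_le j.2 hn⟩, j.2⟩
  invFun i := ⟨i.1.1, i.2⟩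
  left_inv j := rfl
  right_inv i := rfl

lemma integral_subtype_two {n : ℕ} (hn : 2 ≤ n) (G : ℝ → ℝ → ℝ) :
    ∫ a : {i : Fin n // (i : ℕ) < 2} → ℝ, G (a (e2 hn 0)) (a (e2 hn 1))
      = ∫ v : ℝ × ℝ, G v.1 v.2 := by
  have hψ : MeasurePreserving
      ((MeasurableEquiv.finTwoArrow.symm.trans
        (MeasurableEquiv.piCongrLeft (fun _ => ℝ) (e2 hn))) : ℝ × ℝ → _)
      volume volume := by
    have := (volume_measurePreserving_piCongrLeft (fun _ : {i : Fin n // (i : ℕ) < 2} => ℝ)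
      (e2 hn)).comp (volume_preserving_finTwoArrow ℝ).symm
    simpa [MeasurableEquiv.coe_trans, Function.comp_def] using this
  rw [← hψ.integral_comp']
  congr 1

lemma pi_integral (n : ℕ) (hn : 2 ≤ n) (ρ : ℝ) (h1 : -1 ≤ ρ) (h2 : ρ ≤ 1) :
    ∫ x : Fin n → ℝ,
      (if 0 < x ⟨0, by omega⟩ ∧
          0 < ρ * x ⟨0, by omega⟩ + √(1 - ρ^2) * x ⟨1, by omega⟩ then (1:ℝ) else 0)
        * exp (-(∑ i, (x i)^2)/2)
      = (π - arccos ρ) * √(2*π) ^ (n - 2) := by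
  classical
  set s : ℝ := √(1 - ρ^2) with hs
  set P : Fin n → Prop := fun i => (i : ℕ) < 2 with hP
  have hΦ := (volume_preserving_piEquivPiSubtypeProd (fun _ : Fin n => ℝ) P).symm
  rw [← hΦ.integral_comp']
  have hsplit : ∀ y : ({i : Fin n // P i} → ℝ) × ({i : Fin n // ¬ P i} → ℝ),
      ((fun x : Fin n → ℝ =>
        (if 0 < x ⟨0, by omega⟩ ∧
            0 < ρ * x ⟨0, by omega⟩ + s * x ⟨1, by omega⟩ then (1:ℝ) else 0)
          * exp (-(∑ i, (x i)^2)/2))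
        ((MeasurableEquiv.piEquivPiSubtypeProd (fun _ : Fin n => ℝ) P).symm y)) =
      ((fun a : {i : Fin n // P i} → ℝ =>
          (if 0 < a (e2 hn 0) ∧ 0 < ρ * a (e2 hn 0) + s * a (e2 hn 1) then (1:ℝ) else 0)
            * exp (-(∑ i, (a i)^2)/2)) y.1) *
      ((fun b : {i : Fin n // ¬ P i} → ℝ => exp (-(∑ i, (b i)^2)/2)) y.2) := by
    intro y
    set x : Fin n → ℝ :=
      (MeasurableEquiv.piEquivPiSubtypeProd (fun _ : Fin n => ℝ) P).symm y with hx
    have hxi : ∀ i : Fin n, x i = if h : P i then y.1 ⟨i, h⟩ else y.2 ⟨i, h⟩ := by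
      intro i
      simp [hx, MeasurableEquiv.piEquivPiSubtypeProd]
    have hx0 : x ⟨0, by omega⟩ = y.1 (e2 hn 0) := by
      rw [hxi]
      exact dif_pos _
    have hx1 : x ⟨1, by omega⟩ = y.1 (e2 hn 1) := by
      rw [hxi]
      exact dif_pos _
    have hsum : ∑ i, (x i)^2 = (∑ i, (y.1 i)^2) + (∑ i, (y.2 i)^2) := by
      rw [← Fintype.sum_subtype_add_sum_subtype P (fun i => (x i)^2)]
      congr 1
      · apply Finset.sum_congr rfl
        intro i _
        rw [hxi]
        rw [dif_pos i.2]
      · apply Finset.sum_congr rfl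
        intro i _
        rw [hxi]
        rw [dif_neg i.2]
    simp only [hx0, hx1, hsum]
    rw [show -((∑ i, (y.1 i)^2) + (∑ i, (y.2 i)^2))/2
        = -(∑ i, (y.1 i)^2)/2 + -(∑ i, (y.2 i)^2)/2 by ring, Real.exp_add]
    ring
  simp only [hsplit]
  rw [Measure.volume_eq_prod, integral_prod_mul (μ := volume) (ν := volume)
    (fun a : {i : Fin n // P i} → ℝ =>
      (if 0 < a (e2 hn 0) ∧ 0 < ρ * a (e2 hn 0) + s * a (e2 hn 1) then (1:ℝ) else 0)
        * exp (-(∑ i, (a i)^2)/2))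
    (fun b : {i : Fin n // ¬ P i} → ℝ => exp (-(∑ i, (b i)^2)/2))]
  have hfst : ∫ a : {i : Fin n // P i} → ℝ,
      (if 0 < a (e2 hn 0) ∧ 0 < ρ * a (e2 hn 0) + s * a (e2 hn 1) then (1:ℝ) else 0)
        * exp (-(∑ i, (a i)^2)/2) = π - arccos ρ := by
    have hsum2 : ∀ a : {i : Fin n // P i} → ℝ,
        ∑ i, (a i)^2 = (a (e2 hn 0))^2 + (a (e2 hn 1))^2 := by
      intro a
      have h2' : ∑ j : Fin 2, (a (e2 hn j))^2 = ∑ i, (a i)^2 :=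
        Fintype.sum_equiv (e2 hn) _ _ (fun j => rfl)
      rw [← h2', Fin.sum_univ_two]
    simp only [hsum2]
    rw [integral_subtype_two hn (fun u w =>
      (if 0 < u ∧ 0 < ρ * u + s * w then (1:ℝ) else 0) * exp (-(u^2 + w^2)/2))]
    exact wedge_integral ρ h1 h2
  have hsnd : ∫ b : {i : Fin n // ¬ P i} → ℝ, exp (-(∑ i, (b i)^2)/2)
      = √(2*π) ^ (n - 2) := by
    have : ∀ b : {i : Fin n // ¬ P i} → ℝ,
        exp (-(∑ i, (b i)^2)/2) = ∏ i, exp (-((b i)^2)/2) := by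
      intro b
      rw [← Real.exp_sum]
      congr 1
      rw [← Finset.sum_div, ← Finset.sum_neg_distrib]
    simp only [this]
    rw [MeasureTheory.volume_pi, MeasureTheory.integral_fintype_prod_eq_pow (fun t : ℝ => exp (-(t^2)/2))]
    have hg : ∫ t : ℝ, exp (-(t^2)/2) = √(2*π) := by
      have := integral_gaussian (1/2)
      simp only [show ∀ t : ℝ, -(1/2 : ℝ) * t^2 = -(t^2)/2 from fun t => by ring] at this
      rw [this, show π/(1/2:ℝ) = 2*π by ring]
    rw [hg]
    congr 1
    have hcard2 : Fintype.card {i : Fin n // P i} = 2 := by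
      rw [← Fintype.card_congr (e2 hn)]
      simp
    rw [Fintype.card_subtype_compl, hcard2]
    simp
  rw [hfst, hsnd]

lemma kernel_integral {n : ℕ} (hn : 2 ≤ n) (z w : EuclideanSpace ℝ (Fin n))
    (hz : ‖z‖ = 1) (hw : ‖w‖ = 1) :
    ∫ u : EuclideanSpace ℝ (Fin n),
      (if 0 < (inner ℝ z u : ℝ) then (1:ℝ) else 0) * (if 0 < (inner ℝ w u : ℝ) then (1:ℝ) else 0)
        * exp (-(‖u‖^2)/2)
      = (π - arccos (inner ℝ z w : ℝ)) * √(2*π) ^ (n - 2) := by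
  classical
  set ρ : ℝ := (inner ℝ z w : ℝ) with hρ
  have hρabs : |ρ| ≤ 1 := by
    have := abs_real_inner_le_norm z w
    rwa [hz, hw, one_mul] at this
  have hρ1 : -1 ≤ ρ := (abs_le.mp hρabs).1
  have hρ2 : ρ ≤ 1 := (abs_le.mp hρabs).2
  set s : ℝ := √(1 - ρ^2) with hs
  have hsq : ‖w - ρ • z‖^2 = 1 - ρ^2 := by
    rw [norm_sub_sq_real]
    rw [norm_smul, inner_smul_right]
    rw [hz, hw]
    have : (inner ℝ w z : ℝ) = ρ := real_inner_comm z w ▸ rfl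
    rw [this]
    simp [abs_le.mp hρabs]
    ring
  have hbasis : ∃ b : OrthonormalBasis (Fin n) ℝ (EuclideanSpace ℝ (Fin n)),
      b ⟨0, by omega⟩ = z ∧ w = ρ • z + s • b ⟨1, by omega⟩ := by
    have hcard : Module.finrank ℝ (EuclideanSpace ℝ (Fin n)) = Fintype.card (Fin n) := by
      simp [finrank_euclideanSpace]
    by_cases hone : |ρ| < 1
    · have hpos : 0 < 1 - ρ^2 := by nlinarith [abs_lt.mp hone]
      have hspos : 0 < s := Real.sqrt_pos.mpr hpos
      set e : EuclideanSpace ℝ (Fin n) := s⁻¹ • (w - ρ • z) with he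
      have hnorm_sub : ‖w - ρ • z‖ = s := by
        rw [hs, ← hsq, Real.sqrt_sq (norm_nonneg _)]
      have hne : ‖e‖ = 1 := by
        rw [he, norm_smul, hnorm_sub, Real.norm_eq_abs, abs_of_pos (inv_pos.mpr hspos)]
        field_simp
      have hze : (inner ℝ z e : ℝ) = 0 := by
        rw [he, inner_smul_right, inner_sub_right, inner_smul_right]
        have : (inner ℝ z z : ℝ) = 1 := by
          rw [real_inner_self_eq_norm_sq, hz]; norm_num
        rw [this, ← hρ]
        ring
      set v : Fin n → EuclideanSpace ℝ (Fin n) := fun i => if (i : ℕ) = 0 then z else e with hv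
      have horth : Orthonormal ℝ (Set.restrict {(⟨0, by omega⟩ : Fin n), ⟨1, by omega⟩} v) := by
        rw [orthonormal_iff_ite]
        rintro ⟨i, hi⟩ ⟨j, hj⟩
        simp only [Set.mem_insert_iff, Set.mem_singleton_iff] at hi hj
        have hzz : (inner ℝ z z : ℝ) = 1 := by
          rw [real_inner_self_eq_norm_sq, hz]; norm_num
        have hee : (inner ℝ e e : ℝ) = 1 := by
          rw [real_inner_self_eq_norm_sq, hne]; norm_num
        have hez : (inner ℝ e z : ℝ) = 0 := by rw [real_inner_comm]; exact hze
        rcases hi with hi | hi <;> rcases hj with hj | hj <;> subst hi <;> subst hj <;>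
          simp only [Set.restrict_apply, hv, Fin.val_mk, Subtype.mk_eq_mk, Fin.mk.injEq,
            reduceIte] <;>
          first | exact hzz | exact hee | exact hze | exact hez
      obtain ⟨b, hb⟩ := horth.exists_orthonormalBasis_extension_of_card_eq hcard
      refine ⟨b, ?_, ?_⟩
      · have := hb ⟨0, by omega⟩ (by simp)
        rw [this, hv]
        simp
      · have h1 := hb ⟨1, by omega⟩ (by simp)
        rw [h1, hv]
        simp only [Fin.val_mk, if_neg one_ne_zero]
        rw [he, smul_smul, mul_inv_cancel₀ (ne_of_gt hspos), one_smul]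
        abel
    · have habs1 : |ρ| = 1 := le_antisymm hρabs (not_lt.mp hone)
      have hsq1 : ρ^2 = 1 := by
        rw [← sq_abs, habs1]; norm_num
      have hs0 : s = 0 := by rw [hs, hsq1]; simp
      have hwz : w = ρ • z := by
        have h2 : ‖w - ρ • z‖^2 = 0 := by rw [hsq, hsq1]; ring
        rw [pow_eq_zero_iff two_ne_zero, norm_eq_zero, sub_eq_zero] at h2
        exact h2
      set v : Fin n → EuclideanSpace ℝ (Fin n) := fun _ => z with hv
      have horth : Orthonormal ℝ (Set.restrict {(⟨0, by omega⟩ : Fin n)} v) := by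
        rw [orthonormal_iff_ite]
        rintro ⟨i, hi⟩ ⟨j, hj⟩
        simp only [Set.mem_singleton_iff] at hi hj
        subst hi; subst hj
        simp only [Set.restrict_apply, hv, Subtype.mk_eq_mk, reduceIte]
        rw [real_inner_self_eq_norm_sq]; show ‖z‖ ^ 2 = 1; rw [hz]; norm_num
      obtain ⟨b, hb⟩ := horth.exists_orthonormalBasis_extension_of_card_eq hcard
      refine ⟨b, ?_, ?_⟩
      · exact hb ⟨0, by omega⟩ (by simp)
      · rw [hs0, zero_smul, add_zero, hwz]
  obtain ⟨b, hb0, hbw⟩ := hbasis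
  -- transfer the integral to the pi space
  have h2 := b.measurePreserving_repr.integral_comp
    (b.repr.toHomeomorph.measurableEmbedding)
    (fun v : EuclideanSpace ℝ (Fin n) =>
      (if 0 < v ⟨0, by omega⟩ ∧
          0 < ρ * v ⟨0, by omega⟩ + s * v ⟨1, by omega⟩ then (1:ℝ) else 0)
        * exp (-(∑ i, (v i)^2)/2))
  have h1 := (EuclideanSpace.volume_preserving_symm_measurableEquiv_toLp (Fin n)).integral_comp'
    (fun x : Fin n → ℝ =>
      (if 0 < x ⟨0, by omega⟩ ∧
          0 < ρ * x ⟨0, by omega⟩ + s * x ⟨1, by omega⟩ then (1:ℝ) else 0)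
        * exp (-(∑ i, (x i)^2)/2))
  have hpoint : ∀ u : EuclideanSpace ℝ (Fin n),
      (if 0 < (inner ℝ z u : ℝ) then (1:ℝ) else 0) * (if 0 < (inner ℝ w u : ℝ) then (1:ℝ) else 0)
        * exp (-(‖u‖^2)/2)
      = (if 0 < (b.repr u) ⟨0, by omega⟩ ∧
            0 < ρ * (b.repr u) ⟨0, by omega⟩ + s * (b.repr u) ⟨1, by omega⟩ then (1:ℝ) else 0)
          * exp (-(∑ i, ((b.repr u) i)^2)/2) := by
    intro u
    have hc0 : (b.repr u) ⟨0, by omega⟩ = (inner ℝ z u : ℝ) := by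
      rw [← hb0, b.repr_apply_apply]
    have hc1 : (inner ℝ w u : ℝ) = ρ * (b.repr u) ⟨0, by omega⟩
        + s * (b.repr u) ⟨1, by omega⟩ := by
      rw [hbw, inner_add_left, real_inner_smul_left, real_inner_smul_left,
        hc0, ← b.repr_apply_apply]
    have hnorm : ‖u‖^2 = ∑ i, ((b.repr u) i)^2 := by
      rw [← b.repr.norm_map u, EuclideanSpace.norm_eq,
        Real.sq_sqrt (Finset.sum_nonneg fun i _ => sq_nonneg _)]
      simp [sq_abs]
    have hite : ∀ (A B : Prop) (dA : Decidable A) (dB : Decidable B) (r : ℝ),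
        (if A then (1:ℝ) else 0) * (if B then (1:ℝ) else 0) * r
          = (if A ∧ B then (1:ℝ) else 0) * r := by
      intro A B dA dB r
      by_cases hA : A <;> by_cases hB : B <;> simp [hA, hB]
    rw [← hc1, hc0, hnorm]
    exact hite _ _ _ _ _
  calc ∫ u : EuclideanSpace ℝ (Fin n),
        (if 0 < (inner ℝ z u : ℝ) then (1:ℝ) else 0) * (if 0 < (inner ℝ w u : ℝ) then (1:ℝ) else 0)
          * exp (-(‖u‖^2)/2)
      = ∫ u : EuclideanSpace ℝ (Fin n),
        (if 0 < (b.repr u) ⟨0, by omega⟩ ∧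
            0 < ρ * (b.repr u) ⟨0, by omega⟩ + s * (b.repr u) ⟨1, by omega⟩ then (1:ℝ) else 0)
          * exp (-(∑ i, ((b.repr u) i)^2)/2) := by
        exact integral_congr_ae (Filter.Eventually.of_forall hpoint)
    _ = ∫ v : EuclideanSpace ℝ (Fin n),
        (if 0 < v ⟨0, by omega⟩ ∧
            0 < ρ * v ⟨0, by omega⟩ + s * v ⟨1, by omega⟩ then (1:ℝ) else 0)
          * exp (-(∑ i, (v i)^2)/2) := h2
    _ = ∫ x : Fin n → ℝ,
        (if 0 < x ⟨0, by omega⟩ ∧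
            0 < ρ * x ⟨0, by omega⟩ + s * x ⟨1, by omega⟩ then (1:ℝ) else 0)
          * exp (-(∑ i, (x i)^2)/2) := h1
    _ = (π - arccos ρ) * √(2*π) ^ (n - 2) := pi_integral n hn ρ hρ1 hρ2

lemma gauss_integrable (n : ℕ) :
    Integrable (fun u : EuclideanSpace ℝ (Fin n) => exp (-(‖u‖^2)/2)) := by
  have hpi : Integrable (fun x : Fin n → ℝ => exp (-(∑ i, (x i)^2)/2)) := by
    have heq : (fun x : Fin n → ℝ => exp (-(∑ i, (x i)^2)/2))
        = fun x => ∏ i, exp (-((x i)^2)/2) := by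
      funext x
      rw [← Real.exp_sum]
      congr 1
      rw [← Finset.sum_div, ← Finset.sum_neg_distrib]
    rw [heq]
    apply MeasureTheory.Integrable.fintype_prod (f := fun _ : Fin n => fun t : ℝ => exp (-(t^2)/2))
    intro i
    have h0 := integrable_exp_neg_mul_sq (show (0:ℝ) < 1/2 by norm_num)
    have heq2 : (fun t : ℝ => exp (-(t^2)/2)) = fun t : ℝ => exp (-(1/2 : ℝ) * t^2) := by
      funext t
      congr 1
      ring
    rw [heq2]
    exact h0
  have h := (EuclideanSpace.volume_preserving_symm_measurableEquiv_toLp (Fin n)).integrable_comp_emb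
    (MeasurableEquiv.toLp 2 (Fin n → ℝ)).symm.measurableEmbedding
    (g := fun x : Fin n → ℝ => exp (-(∑ i, (x i)^2)/2))
  rw [← h] at hpi
  apply hpi.congr
  refine Filter.Eventually.of_forall fun u => ?_
  simp only [Function.comp_apply]
  congr 2
  rw [EuclideanSpace.norm_eq, Real.sq_sqrt (Finset.sum_nonneg fun i _ => sq_nonneg _)]
  simp only [Real.norm_eq_abs, sq_abs]
  rfl

lemma indicator_integrable {n : ℕ} (z w : EuclideanSpace ℝ (Fin n)) :
    Integrable (fun u : EuclideanSpace ℝ (Fin n) =>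
      (if 0 < (inner ℝ z u : ℝ) then (1:ℝ) else 0) * (if 0 < (inner ℝ w u : ℝ) then (1:ℝ) else 0)
        * exp (-(‖u‖^2)/2)) := by
  have hmeas : ∀ y : EuclideanSpace ℝ (Fin n),
      Measurable (fun u : EuclideanSpace ℝ (Fin n) =>
        if 0 < (inner ℝ y u : ℝ) then (1:ℝ) else 0) := by
    intro y
    have hc : Continuous (fun u : EuclideanSpace ℝ (Fin n) => (inner ℝ y u : ℝ)) :=
      continuous_const.inner continuous_id
    exact Measurable.ite (measurableSet_lt measurable_const hc.measurable)
      measurable_const measurable_const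
  apply (gauss_integrable n).mono'
  · exact (((hmeas z).mul (hmeas w)).mul
      (((continuous_norm.pow 2).neg.div_const 2).rexp.measurable)).aestronglyMeasurable
  · have hgen : ∀ (A B : Prop) (dA : Decidable A) (dB : Decidable B) (r : ℝ), 0 ≤ r →
        |(if A then (1:ℝ) else 0) * (if B then (1:ℝ) else 0) * r| ≤ r := by
      intro A B dA dB r hr
      by_cases hA : A <;> by_cases hB : B <;> simp [hA, hB, abs_of_nonneg hr, hr]
    exact Filter.Eventually.of_forall fun u => hgen _ _ _ _ _ (exp_pos _).le

lemma main_psd {n : ℕ} (hn : 2 ≤ n) (m : ℕ)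
    (z : Fin m → EuclideanSpace ℝ (Fin n)) (hz : ∀ k, ‖z k‖ = 1)
    (c : Fin m → ℝ) :
    0 ≤ ∑ k, ∑ l, c k * c l * (π - arccos (inner ℝ (z k) (z l) : ℝ)) := by
  classical
  set C : ℝ := √(2*π) ^ (n - 2) with hC
  have hCpos : 0 < C := by
    apply pow_pos
    apply Real.sqrt_pos.mpr
    positivity
  set F : Fin m → EuclideanSpace ℝ (Fin n) → ℝ :=
    fun k u => c k * (if 0 < (inner ℝ (z k) u : ℝ) then (1:ℝ) else 0) with hF
  have hint : ∀ k l : Fin m, Integrable (fun u : EuclideanSpace ℝ (Fin n) =>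
      F k u * F l u * exp (-(‖u‖^2)/2)) := by
    intro k l
    have := ((indicator_integrable (z k) (z l)).const_mul (c k * c l))
    apply this.congr
    refine Filter.Eventually.of_forall fun u => ?_
    simp only [hF]
    ring
  have hval : ∀ k l : Fin m, ∫ u : EuclideanSpace ℝ (Fin n),
      F k u * F l u * exp (-(‖u‖^2)/2)
      = c k * c l * ((π - arccos (inner ℝ (z k) (z l) : ℝ)) * C) := by
    intro k l
    have heq : (fun u : EuclideanSpace ℝ (Fin n) => F k u * F l u * exp (-(‖u‖^2)/2))
        = fun u => (c k * c l) * ((if 0 < (inner ℝ (z k) u : ℝ) then (1:ℝ) else 0)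
            * (if 0 < (inner ℝ (z l) u : ℝ) then (1:ℝ) else 0) * exp (-(‖u‖^2)/2)) := by
      funext u
      simp only [hF]
      ring
    rw [heq, MeasureTheory.integral_const_mul, kernel_integral hn (z k) (z l) (hz k) (hz l)]
  have hnn : 0 ≤ ∫ u : EuclideanSpace ℝ (Fin n),
      (∑ k, F k u)^2 * exp (-(‖u‖^2)/2) :=
    integral_nonneg fun u => mul_nonneg (sq_nonneg _) (exp_pos _).le
  have hsq : (fun u : EuclideanSpace ℝ (Fin n) => (∑ k, F k u)^2 * exp (-(‖u‖^2)/2))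
      = fun u => ∑ k, ∑ l, F k u * F l u * exp (-(‖u‖^2)/2) := by
    funext u
    rw [sq, Finset.sum_mul_sum]
    rw [Finset.sum_mul]
    apply Finset.sum_congr rfl
    intro k _
    rw [Finset.sum_mul]
  rw [hsq] at hnn
  have hswap : ∫ u : EuclideanSpace ℝ (Fin n),
      ∑ k, ∑ l, F k u * F l u * exp (-(‖u‖^2)/2)
      = ∑ k, ∑ l, ∫ u : EuclideanSpace ℝ (Fin n), F k u * F l u * exp (-(‖u‖^2)/2) := by
    rw [integral_finset_sum _ (fun k _ => integrable_finset_sum _ (fun l _ => hint k l))]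
    exact Finset.sum_congr rfl fun k _ => integral_finset_sum _ (fun l _ => hint k l)
  rw [hswap] at hnn
  simp only [hval] at hnn
  have hfin : 0 ≤ (∑ k, ∑ l, c k * c l * (π - arccos (inner ℝ (z k) (z l) : ℝ))) * C := by
    calc (0:ℝ) ≤ ∑ k, ∑ l, c k * c l * ((π - arccos (inner ℝ (z k) (z l) : ℝ)) * C) := hnn
    _ = (∑ k, ∑ l, c k * c l * (π - arccos (inner ℝ (z k) (z l) : ℝ))) * C := by
        rw [Finset.sum_mul]
        apply Finset.sum_congr rfl
        intro k _
        rw [Finset.sum_mul]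
        apply Finset.sum_congr rfl
        intro l _
        ring
  nlinarith [hfin, hCpos]

/-- `ψ(θ) = π − θ` defines a positive semi-definite kernel on the unit sphere `S^{p-1}`
for every `p ≥ 1`: for unit vectors `z_1,…,z_m` and any `c ∈ ℝ^m`,
`Σ_{k,ℓ} c_k c_ℓ (π − arccos⟪z_k, z_ℓ⟫) ≥ 0`. -/
theorem stmt13 (p : ℕ) (hp : 1 ≤ p) (m : ℕ)
    (z : Fin m → EuclideanSpace ℝ (Fin p)) (hz : ∀ k, ‖z k‖ = 1)
    (c : Fin m → ℝ) :
    0 ≤ ∑ k, ∑ l, c k * c l * (π - arccos (inner ℝ (z k) (z l) : ℝ)) := by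
  have hn : 2 ≤ p + 2 := by omega
  set z' : Fin m → EuclideanSpace ℝ (Fin (p + 2)) :=
    fun k => (WithLp.equiv 2 (Fin (p + 2) → ℝ)).symm
      (fun i => Sum.elim (z k) (fun _ => (0:ℝ)) (finSumFinEquiv.symm i)) with hz'
  have happ : ∀ k (i : Fin (p + 2)),
      z' k i = Sum.elim (z k) (fun _ => (0:ℝ)) (finSumFinEquiv.symm i) := by
    intro k i
    rw [hz']
    rfl
  have hinner : ∀ k l, (inner ℝ (z' k) (z' l) : ℝ) = (inner ℝ (z k) (z l) : ℝ) := by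
    intro k l
    rw [PiLp.inner_apply, PiLp.inner_apply]
    have hsum := Fintype.sum_equiv finSumFinEquiv
      (fun s : Fin p ⊕ Fin 2 =>
        (inner ℝ (z' k (finSumFinEquiv s)) (z' l (finSumFinEquiv s)) : ℝ))
      (fun i : Fin (p + 2) => (inner ℝ (z' k i) (z' l i) : ℝ)) (fun s => rfl)
    rw [← hsum, Fintype.sum_sum_type]
    have h2 : ∀ b : Fin 2,
        (inner ℝ (z' k (finSumFinEquiv (Sum.inr b))) (z' l (finSumFinEquiv (Sum.inr b))) : ℝ)
          = 0 := by
      intro b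
      rw [happ, happ, Equiv.symm_apply_apply]
      simp
    have h1 : ∀ a : Fin p,
        (inner ℝ (z' k (finSumFinEquiv (Sum.inl a))) (z' l (finSumFinEquiv (Sum.inl a))) : ℝ)
          = (inner ℝ (z k a) (z l a) : ℝ) := by
      intro a
      rw [happ, happ, Equiv.symm_apply_apply]
      simp
    simp only [h1, h2, Finset.sum_const_zero, add_zero]
  have hzn : ∀ k, ‖z' k‖ = 1 := by
    intro k
    have hself : (inner ℝ (z' k) (z' k) : ℝ) = 1 := by
      rw [hinner, real_inner_self_eq_norm_sq, hz k]
      norm_num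
    rw [real_inner_self_eq_norm_sq] at hself
    nlinarith [norm_nonneg (z' k)]
  have := main_psd hn m z' hzn c
  simp only [hinner] at this
  exact this

end
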